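/- Let l_s ≤ l_m be integers, V_l > 0 for l = l_s, …, l_m, and ε > 0. Among all families of positive reals (N_l)_{l=l_s}^{l_m} satisfying the variance constraint Σ_{l=l_s}^{l_m} V_l/N_l = ε, the total cost K = Σ_{l=l_s}^{l_m} N_l·2^l satisfies K ≥ ε⁻¹ (Σ_{l=l_s}^{l_m} √(V_l·2^l))², with equality exactly when N_l = ε⁻¹ √(V_l·2^{−l}) · Σ_{k=l_s}^{l_m} √(V_k·2^k) for every l; thus this choice of sample sizes minimizes the MLMC computational cost subject to the constraint. -/

import Mathlib

open Finset

/-- Cauchy–Schwarz with equality case, for positive `a`. -/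
lemma cauchy_schwarz_eq {ι : Type*} (s : Finset ι) (a b : ι → ℝ)
    (ha : ∀ i ∈ s, 0 < a i) :
    (∑ i ∈ s, a i * b i) ^ 2 ≤ (∑ i ∈ s, a i ^ 2) * (∑ i ∈ s, b i ^ 2) ∧
    (s.Nonempty →
      ((∑ i ∈ s, a i * b i) ^ 2 = (∑ i ∈ s, a i ^ 2) * (∑ i ∈ s, b i ^ 2) ↔
        ∀ i ∈ s, b i = ((∑ j ∈ s, a j * b j) / (∑ j ∈ s, a j ^ 2)) * a i)) := by
  rcases s.eq_empty_or_nonempty with rfl | hs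
  · simp
  have hA : 0 < ∑ i ∈ s, a i ^ 2 := by
    refine Finset.sum_pos (fun i hi => pow_pos (ha i hi) 2) hs
  set A := ∑ i ∈ s, a i ^ 2 with hAdef
  set P := ∑ i ∈ s, a i * b i with hPdef
  set c := P / A with hc
  have key : ∑ i ∈ s, (b i - c * a i) ^ 2 = (∑ i ∈ s, b i ^ 2) - P ^ 2 / A := by
    have : ∀ i ∈ s, (b i - c * a i) ^ 2
        = b i ^ 2 - 2 * c * (a i * b i) + c ^ 2 * a i ^ 2 := by
      intro i _; ring
    rw [Finset.sum_congr rfl this, Finset.sum_add_distrib, Finset.sum_sub_distrib,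
      ← Finset.mul_sum, ← Finset.mul_sum, ← hPdef, ← hAdef, hc]
    field_simp
    ring
  have hnn : 0 ≤ ∑ i ∈ s, (b i - c * a i) ^ 2 :=
    Finset.sum_nonneg fun i _ => sq_nonneg _
  have hineq : P ^ 2 ≤ A * ∑ i ∈ s, b i ^ 2 := by
    rw [key] at hnn
    have := sub_nonneg.mp hnn
    calc P ^ 2 = A * (P ^ 2 / A) := by field_simp
    _ ≤ A * ∑ i ∈ s, b i ^ 2 := by
        exact mul_le_mul_of_nonneg_left this hA.le
  refine ⟨hineq, fun _ => ?_⟩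
  constructor
  · intro heq
    have hz : ∑ i ∈ s, (b i - c * a i) ^ 2 = 0 := by
      rw [key, sub_eq_zero, heq]
      field_simp
    intro i hi
    have := (Finset.sum_eq_zero_iff_of_nonneg (fun i _ => sq_nonneg (b i - c * a i))).mp hz i hi
    have hbi : b i - c * a i = 0 := by
      exact pow_eq_zero_iff (n := 2) (by norm_num) |>.mp this
    have := sub_eq_zero.mp hbi
    rw [this, hc]
  · intro h
    have : ∀ i ∈ s, a i * b i = c * a i ^ 2 := by
      intro i hi; rw [h i hi, hc]; ring
    have hP : P = c * A := by
      rw [hPdef, Finset.sum_congr rfl this, ← Finset.mul_sum, ← hAdef]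
    have hb2 : ∀ i ∈ s, b i ^ 2 = c ^ 2 * a i ^ 2 := by
      intro i hi; rw [h i hi, hc]; ring
    have hB : (∑ i ∈ s, b i ^ 2) = c ^ 2 * A := by
      rw [Finset.sum_congr rfl hb2, ← Finset.mul_sum, ← hAdef]
    rw [hP, hB]; ring

/-- Optimal MLMC sample sizes: among positive `(N_l)` with `Σ V_l/N_l = ε`, the cost
`Σ N_l 2^l` is at least `ε⁻¹ (Σ √(V_l 2^l))²`, with equality exactly for
`N_l = ε⁻¹ √(V_l 2^{−l}) Σ_k √(V_k 2^k)`. -/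
theorem mlmc_optimal_sample_sizes (ls lm : ℤ) (hle : ls ≤ lm)
    (V : ℤ → ℝ) (hV : ∀ l ∈ Finset.Icc ls lm, 0 < V l)
    (ε : ℝ) (hε : 0 < ε)
    (N : ℤ → ℝ) (hN : ∀ l ∈ Finset.Icc ls lm, 0 < N l)
    (hconstraint : ∑ l ∈ Finset.Icc ls lm, V l / N l = ε) :
    ε⁻¹ * (∑ l ∈ Finset.Icc ls lm, Real.sqrt (V l * (2 : ℝ) ^ l)) ^ 2 ≤
      (∑ l ∈ Finset.Icc ls lm, N l * (2 : ℝ) ^ l) ∧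
    ((∑ l ∈ Finset.Icc ls lm, N l * (2 : ℝ) ^ l) =
        ε⁻¹ * (∑ l ∈ Finset.Icc ls lm, Real.sqrt (V l * (2 : ℝ) ^ l)) ^ 2 ↔
      ∀ l ∈ Finset.Icc ls lm,
        N l = ε⁻¹ * Real.sqrt (V l * (2 : ℝ) ^ (-l)) *
          ∑ k ∈ Finset.Icc ls lm, Real.sqrt (V k * (2 : ℝ) ^ k)) := by
  set s := Finset.Icc ls lm with hs
  have hsne : s.Nonempty := ⟨ls, by simp [hs, hle]⟩
  set a : ℤ → ℝ := fun l => Real.sqrt (V l / N l) with ha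
  set b : ℤ → ℝ := fun l => Real.sqrt (N l * (2 : ℝ) ^ l) with hb
  have hapos : ∀ l ∈ s, 0 < a l := fun l hl =>
    Real.sqrt_pos.mpr (div_pos (hV l hl) (hN l hl))
  have htwo : ∀ l : ℤ, (0 : ℝ) < (2 : ℝ) ^ l := fun l => zpow_pos (by norm_num) l
  have hbpos : ∀ l ∈ s, 0 < b l := fun l hl =>
    Real.sqrt_pos.mpr (mul_pos (hN l hl) (htwo l))
  have hab : ∀ l ∈ s, a l * b l = Real.sqrt (V l * (2 : ℝ) ^ l) := by
    intro l hl
    rw [ha, hb]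
    rw [← Real.sqrt_mul (div_nonneg (hV l hl).le (hN l hl).le)]
    congr 1
    have hNl := (hN l hl).ne'
    field_simp
  have ha2 : ∀ l ∈ s, a l ^ 2 = V l / N l := by
    intro l hl
    exact Real.sq_sqrt (div_nonneg (hV l hl).le (hN l hl).le)
  have hb2 : ∀ l ∈ s, b l ^ 2 = N l * (2 : ℝ) ^ l := by
    intro l hl
    exact Real.sq_sqrt (mul_nonneg (hN l hl).le (htwo l).le)
  have hA : (∑ l ∈ s, a l ^ 2) = ε := by
    rw [Finset.sum_congr rfl ha2]; exact hconstraint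
  set S := ∑ k ∈ s, Real.sqrt (V k * (2 : ℝ) ^ k) with hS
  have hSpos : 0 < S :=
    Finset.sum_pos (fun k hk => Real.sqrt_pos.mpr (mul_pos (hV k hk) (htwo k))) hsne
  have hP : (∑ l ∈ s, a l * b l) = S := Finset.sum_congr rfl hab
  set K := ∑ l ∈ s, N l * (2 : ℝ) ^ l with hK
  have hB : (∑ l ∈ s, b l ^ 2) = K := Finset.sum_congr rfl hb2
  obtain ⟨hineq, heqiff⟩ := cauchy_schwarz_eq s a b hapos
  rw [hP, hA, hB] at hineq heqiff
  have heqiff := heqiff hsne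
  constructor
  · rw [inv_mul_le_iff₀ hε]
    linarith
  · have hKiff : K = ε⁻¹ * S ^ 2 ↔ S ^ 2 = ε * K := by
      constructor
      · intro h
        rw [h]
        field_simp
      · intro h
        rw [h]
        field_simp
    rw [hKiff, heqiff]
    constructor
    · intro h l hl
      have hbl := h l hl
      have hsq : N l * (2 : ℝ) ^ l = (S / ε) ^ 2 * (V l / N l) := by
        have := congrArg (fun x => x ^ 2) hbl
        simp only [mul_pow] at this
        rw [hb2 l hl] at this
        rw [this, ha2 l hl]
      have hN2 : N l ^ 2 = (S / ε) ^ 2 * (V l * (2 : ℝ) ^ (-l)) := by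
        have hNl := hN l hl
        have h2 : ((2 : ℝ) ^ l) ≠ 0 := (htwo l).ne'
        rw [zpow_neg]
        field_simp at hsq ⊢
        nlinarith [hsq]
      have hNval : N l = (S / ε) * Real.sqrt (V l * (2 : ℝ) ^ (-l)) := by
        have h1 : N l = Real.sqrt (N l ^ 2) := (Real.sqrt_sq (hN l hl).le).symm
        rw [h1, hN2, Real.sqrt_mul (sq_nonneg _), Real.sqrt_sq (div_nonneg hSpos.le hε.le)]
      rw [hNval]; ring
    · intro h l hl
      have hNval := h l hl
      have hVnn : (0 : ℝ) ≤ V l * (2 : ℝ) ^ (-l) := (mul_pos (hV l hl) (htwo (-l))).le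
      have hN2 : N l ^ 2 = (S / ε) ^ 2 * (V l * (2 : ℝ) ^ (-l)) := by
        rw [hNval, mul_pow, mul_pow, Real.sq_sqrt hVnn]
        field_simp
      have hN2' : N l ^ 2 * ε ^ 2 = S ^ 2 * (V l * (2 : ℝ) ^ (-l)) := by
        rw [hN2, div_pow]
        field_simp
      have hsq : N l * (2 : ℝ) ^ l = (S / ε) ^ 2 * (V l / N l) := by
        have hNl := hN l hl
        have h2 : ((2 : ℝ) ^ l) ≠ 0 := (htwo l).ne'
        have hz : (2 : ℝ) ^ (-l) * (2 : ℝ) ^ l = 1 := by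
          rw [← zpow_add₀ (by norm_num : (2:ℝ) ≠ 0)]; simp
        field_simp
        linear_combination (2 : ℝ) ^ l * hN2' + S ^ 2 * V l * hz
      show Real.sqrt (N l * (2 : ℝ) ^ l) = S / ε * Real.sqrt (V l / N l)
      rw [hsq, Real.sqrt_mul (sq_nonneg _), Real.sqrt_sq (div_nonneg hSpos.le hε.le)]
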